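/- Suppose m = n and n ≥ 3. Assume the initial vector satisfies: 0 < x̄(0) − x_1(0) ≤ η; η < x_2(0) − x̄(0) < η + (x̄(0) − x_1(0))/(n−1); and |x_j(0) − x̄(0)| ≥ η + (x̄(0) − x_1(0))/(n−1) for every j ≥ 3. Write ρ = 1 − δ + δ/n and t* = ⌈ ln(1 − (n−1)(x_2(0) − x̄(0) − η)/(x̄(0) − x_1(0))) / ln ρ ⌉. Then: (i) for every 0 ≤ t ≤ t*, x_j(t) = x_j(0) for all j ≠ 1 and x̄(t) − x_1(t) = ρ^t (x̄(0) − x_1(0)) > 0; (ii) x_2(t) − x̄(t) > η for 0 ≤ t < t* and x_2(t*) − x̄(t*) ≤ η; and (iii) every node state x_i(t) converges to a finite limit as t → ∞. -/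

import Mathlib

open Filter MeasureTheory

/-- Average of a vector of `n` opinions. -/
noncomputable def cliqueAvg (n : ℕ) (x : Fin n → ℝ) : ℝ := (∑ j, x j) / (n : ℝ)

/-- Full-clique (`m = n`) bounded-confidence opinion dynamics with mixing parameter `δ`
and confidence level `η`, started from `x0`. -/
noncomputable def fcTraj (n : ℕ) (δ η : ℝ) (x0 : Fin n → ℝ) : ℕ → Fin n → ℝ
  | 0 => x0
  | t + 1 => fun i =>
      if |fcTraj n δ η x0 t i - cliqueAvg n (fcTraj n δ η x0 t)| ≤ η then
        (1 - δ) * fcTraj n δ η x0 t i + δ * cliqueAvg n (fcTraj n δ η x0 t)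
      else fcTraj n δ η x0 t i
open Classical in
noncomputable def fS (n : ℕ) (δ η : ℝ) (x0 : Fin n → ℝ) (t : ℕ) : Finset (Fin n) :=
  Finset.univ.filter (fun i => |fcTraj n δ η x0 t i - cliqueAvg n (fcTraj n δ η x0 t)| ≤ η)

noncomputable def fσ (n : ℕ) (δ η : ℝ) (x0 : Fin n → ℝ) (t : ℕ) : ℝ :=
  ∑ i ∈ fS n δ η x0 t, (fcTraj n δ η x0 t i - cliqueAvg n (fcTraj n δ η x0 t))

lemma mem_fS {n : ℕ} {δ η : ℝ} {x0 : Fin n → ℝ} {t : ℕ} {i : Fin n} :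
    i ∈ fS n δ η x0 t ↔ |fcTraj n δ η x0 t i - cliqueAvg n (fcTraj n δ η x0 t)| ≤ η := by
  simp [fS]

lemma fcTraj_succ (n : ℕ) (δ η : ℝ) (x0 : Fin n → ℝ) (t : ℕ) (i : Fin n) :
    fcTraj n δ η x0 (t+1) i = fcTraj n δ η x0 t i +
      (if i ∈ fS n δ η x0 t then
        δ * (cliqueAvg n (fcTraj n δ η x0 t) - fcTraj n δ η x0 t i) else 0) := by
  show (if _ then _ else _) = _
  by_cases h : i ∈ fS n δ η x0 t
  · rw [if_pos (mem_fS.1 h), if_pos h]; ring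
  · rw [if_neg (fun hc => h (mem_fS.2 hc)), if_neg h]; ring

lemma fcTraj_succ_mem {n : ℕ} {δ η : ℝ} {x0 : Fin n → ℝ} {t : ℕ} {i : Fin n}
    (h : i ∈ fS n δ η x0 t) :
    fcTraj n δ η x0 (t+1) i = fcTraj n δ η x0 t i +
      δ * (cliqueAvg n (fcTraj n δ η x0 t) - fcTraj n δ η x0 t i) := by
  rw [fcTraj_succ, if_pos h]

lemma fcTraj_succ_not {n : ℕ} {δ η : ℝ} {x0 : Fin n → ℝ} {t : ℕ} {i : Fin n}
    (h : i ∉ fS n δ η x0 t) :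
    fcTraj n δ η x0 (t+1) i = fcTraj n δ η x0 t i := by
  rw [fcTraj_succ, if_neg h, add_zero]

lemma sum_eq_avg (n : ℕ) (hn : 0 < n) (x : Fin n → ℝ) :
    ∑ j, x j = n * cliqueAvg n x := by
  rw [cliqueAvg, mul_div_cancel₀]
  exact Nat.cast_ne_zero.2 hn.ne'

lemma cliqueAvg_succ (n : ℕ) (hn : 0 < n) (δ η : ℝ) (x0 : Fin n → ℝ) (t : ℕ) :
    cliqueAvg n (fcTraj n δ η x0 (t+1)) =
      cliqueAvg n (fcTraj n δ η x0 t) - (δ / n) * fσ n δ η x0 t := by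
  have hn' : (n : ℝ) ≠ 0 := Nat.cast_ne_zero.2 hn.ne'
  have hsum : ∑ j, fcTraj n δ η x0 (t+1) j =
      ∑ j, fcTraj n δ η x0 t j - δ * fσ n δ η x0 t := by
    simp only [fcTraj_succ n δ η x0 t, Finset.sum_add_distrib]
    rw [Finset.sum_ite_mem, Finset.univ_inter, fσ, Finset.mul_sum]
    have : ∑ i ∈ fS n δ η x0 t, δ * (cliqueAvg n (fcTraj n δ η x0 t) - fcTraj n δ η x0 t i)
        = - ∑ i ∈ fS n δ η x0 t, δ * (fcTraj n δ η x0 t i - cliqueAvg n (fcTraj n δ η x0 t)) := by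
      rw [← Finset.sum_neg_distrib]
      exact Finset.sum_congr rfl (fun i _ => by ring)
    rw [this]; ring
  rw [cliqueAvg, hsum, sum_eq_avg n hn]
  field_simp

lemma dev_succ_mem {n : ℕ} (hn : 0 < n) {δ η : ℝ} {x0 : Fin n → ℝ} {t : ℕ} {i : Fin n}
    (h : i ∈ fS n δ η x0 t) :
    fcTraj n δ η x0 (t+1) i - cliqueAvg n (fcTraj n δ η x0 (t+1)) =
      (1 - δ) * (fcTraj n δ η x0 t i - cliqueAvg n (fcTraj n δ η x0 t))
        + (δ / n) * fσ n δ η x0 t := by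
  rw [fcTraj_succ_mem h, cliqueAvg_succ n hn]; ring

lemma dev_succ_not {n : ℕ} (hn : 0 < n) {δ η : ℝ} {x0 : Fin n → ℝ} {t : ℕ} {i : Fin n}
    (h : i ∉ fS n δ η x0 t) :
    fcTraj n δ η x0 (t+1) i - cliqueAvg n (fcTraj n δ η x0 (t+1)) =
      (fcTraj n δ η x0 t i - cliqueAvg n (fcTraj n δ η x0 t)) + (δ / n) * fσ n δ η x0 t := by
  rw [fcTraj_succ_not h, cliqueAvg_succ n hn]; ring

lemma abs_fσ_le {n : ℕ} {δ η : ℝ} (hη : 0 ≤ η) {x0 : Fin n → ℝ} {t : ℕ} :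
    |fσ n δ η x0 t| ≤ n * η := by
  calc |fσ n δ η x0 t| ≤ ∑ i ∈ fS n δ η x0 t,
        |fcTraj n δ η x0 t i - cliqueAvg n (fcTraj n δ η x0 t)| :=
      Finset.abs_sum_le_sum_abs _ _
    _ ≤ ∑ _i ∈ fS n δ η x0 t, η := Finset.sum_le_sum (fun i hi => mem_fS.1 hi)
    _ = (fS n δ η x0 t).card * η := by rw [Finset.sum_const, nsmul_eq_mul]
    _ ≤ n * η := by
        apply mul_le_mul_of_nonneg_right _ hη
        have := Finset.card_le_univ (fS n δ η x0 t)
        simp only [Finset.card_univ, Fintype.card_fin] at this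
        exact_mod_cast this

lemma fS_mono {n : ℕ} (hn : 0 < n) {δ η : ℝ} (hδ0 : 0 < δ) (hδ1 : δ < 1) (hη : 0 ≤ η)
    {x0 : Fin n → ℝ} {t : ℕ} : fS n δ η x0 t ⊆ fS n δ η x0 (t+1) := by
  intro i hi
  rw [mem_fS]
  rw [dev_succ_mem hn hi]
  have hd : |fcTraj n δ η x0 t i - cliqueAvg n (fcTraj n δ η x0 t)| ≤ η := mem_fS.1 hi
  have hσ : (δ / n) * |fσ n δ η x0 t| ≤ δ * η := by
    have h1 : (δ / n) * |fσ n δ η x0 t| ≤ (δ / n) * (n * η) :=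
      mul_le_mul_of_nonneg_left (abs_fσ_le hη) (by positivity)
    have hn' : (n : ℝ) ≠ 0 := Nat.cast_ne_zero.2 hn.ne'
    calc (δ / n) * |fσ n δ η x0 t| ≤ (δ / n) * (n * η) := h1
      _ = δ * η := by field_simp
  calc |(1 - δ) * (fcTraj n δ η x0 t i - cliqueAvg n (fcTraj n δ η x0 t))
        + (δ / n) * fσ n δ η x0 t|
      ≤ |(1 - δ) * (fcTraj n δ η x0 t i - cliqueAvg n (fcTraj n δ η x0 t))|
        + |(δ / n) * fσ n δ η x0 t| := abs_add_le _ _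
    _ = (1 - δ) * |fcTraj n δ η x0 t i - cliqueAvg n (fcTraj n δ η x0 t)|
        + (δ / n) * |fσ n δ η x0 t| := by
          rw [abs_mul, abs_mul, abs_of_nonneg (show (0:ℝ) ≤ 1 - δ by linarith),
            abs_of_nonneg (show (0:ℝ) ≤ δ / n by positivity)]
    _ ≤ (1 - δ) * η + δ * η := by
        refine add_le_add (mul_le_mul_of_nonneg_left hd (by linarith)) hσ
    _ = η := by ring

lemma fS_mono' {n : ℕ} (hn : 0 < n) {δ η : ℝ} (hδ0 : 0 < δ) (hδ1 : δ < 1) (hη : 0 ≤ η)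
    {x0 : Fin n → ℝ} {s t : ℕ} (hst : s ≤ t) : fS n δ η x0 s ⊆ fS n δ η x0 t := by
  induction t with
  | zero => simpa [Nat.le_zero.1 hst]
  | succ t ih =>
      rcases Nat.lt_or_ge s (t+1) with h | h
      · exact (ih (Nat.lt_succ_iff.1 h)).trans (fS_mono hn hδ0 hδ1 hη)
      · have : s = t + 1 := le_antisymm hst h
        simp [this]

lemma fS_stab {n : ℕ} (hn : 0 < n) {δ η : ℝ} (hδ0 : 0 < δ) (hδ1 : δ < 1) (hη : 0 ≤ η)
    (x0 : Fin n → ℝ) : ∃ T, ∀ t, T ≤ t → fS n δ η x0 t = fS n δ η x0 T := by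
  set f : ℕ → ℕ := fun t => (fS n δ η x0 t).card with hf
  have hbdd : BddAbove (Set.range f) := by
    refine ⟨n, ?_⟩
    rintro y ⟨t, rfl⟩
    have := Finset.card_le_univ (fS n δ η x0 t)
    simpa using this
  have hmem : sSup (Set.range f) ∈ Set.range f :=
    Nat.sSup_mem ⟨f 0, ⟨0, rfl⟩⟩ hbdd
  obtain ⟨T, hT⟩ := hmem
  refine ⟨T, fun t ht => ?_⟩
  have hsub : fS n δ η x0 T ⊆ fS n δ η x0 t := fS_mono' hn hδ0 hδ1 hη ht
  have hcard : (fS n δ η x0 t).card ≤ (fS n δ η x0 T).card := by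
    show f t ≤ f T
    rw [hT]
    exact le_csSup hbdd ⟨t, rfl⟩
  exact (Finset.eq_of_subset_of_card_le hsub hcard).symm

lemma fσ_law {n : ℕ} (hn : 0 < n) {δ η : ℝ} (hδ0 : 0 < δ) (hδ1 : δ < 1) (hη : 0 ≤ η)
    {x0 : Fin n → ℝ} {T : ℕ} (hT : ∀ t, T ≤ t → fS n δ η x0 t = fS n δ η x0 T) (k : ℕ) :
    fσ n δ η x0 (T + k) = (1 - δ + (fS n δ η x0 T).card * (δ / n)) ^ k * fσ n δ η x0 T := by
  induction k with
  | zero => simp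
  | succ k ih =>
      have hk : fS n δ η x0 (T + k) = fS n δ η x0 T := hT _ (Nat.le_add_right _ _)
      have hk1 : fS n δ η x0 (T + (k+1)) = fS n δ η x0 T := hT _ (Nat.le_add_right _ _)
      have step : fσ n δ η x0 (T + k + 1) =
          (1 - δ + (fS n δ η x0 T).card * (δ / n)) * fσ n δ η x0 (T + k) := by
        rw [fσ]
        rw [show fS n δ η x0 (T + k + 1) = fS n δ η x0 T from hk1]
        have : ∀ j ∈ fS n δ η x0 T,
            fcTraj n δ η x0 (T + k + 1) j - cliqueAvg n (fcTraj n δ η x0 (T + k + 1)) =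
            (1 - δ) * (fcTraj n δ η x0 (T + k) j - cliqueAvg n (fcTraj n δ η x0 (T + k)))
              + (δ / n) * fσ n δ η x0 (T + k) := by
          intro j hj
          exact dev_succ_mem hn (by rw [hk]; exact hj)
        rw [Finset.sum_congr rfl this, Finset.sum_add_distrib, ← Finset.mul_sum,
          Finset.sum_const, nsmul_eq_mul]
        rw [fσ, hk]
        ring
      calc fσ n δ η x0 (T + (k+1)) = fσ n δ η x0 (T + k + 1) := rfl
        _ = _ := by rw [step, ih]; ring

lemma fσ_univ_zero {n : ℕ} (hn : 0 < n) {δ η : ℝ} {x0 : Fin n → ℝ} {t : ℕ}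
    (h : fS n δ η x0 t = Finset.univ) : fσ n δ η x0 t = 0 := by
  rw [fσ, h, Finset.sum_sub_distrib, Finset.sum_const, sum_eq_avg n hn, Finset.card_univ,
    Fintype.card_fin, nsmul_eq_mul, sub_self]

lemma fc_converges {n : ℕ} (hn : 0 < n) {δ η : ℝ} (hδ0 : 0 < δ) (hδ1 : δ < 1) (hη : 0 ≤ η)
    (x0 : Fin n → ℝ) (i : Fin n) :
    ∃ L : ℝ, Tendsto (fun t => fcTraj n δ η x0 t i) atTop (nhds L) := by
  obtain ⟨T, hT⟩ := fS_stab hn hδ0 hδ1 hη x0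
  by_cases hi : i ∈ fS n δ η x0 T
  · -- eventually active; Cauchy via summable increments
    have hn' : (0:ℝ) < n := by exact_mod_cast hn
    set β : ℝ := 1 - δ / n with hβ
    have hβ0 : 0 < β := by
      have h2 : δ / n < 1 := by
        have h1 : δ / n ≤ δ := by
          apply div_le_self hδ0.le
          exact_mod_cast hn
        linarith
      simp only [hβ]; linarith
    have hβ1 : β < 1 := by
      have : 0 < δ / n := by positivity
      simp only [hβ]; linarith
    have h1δβ : 1 - δ ≤ β := by
      have : δ / n ≤ δ := div_le_self hδ0.le (by exact_mod_cast hn)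
      simp only [hβ]; linarith
    have h1δ0 : 0 ≤ 1 - δ := by linarith
    -- sigma bound
    have hσb : ∀ k, |fσ n δ η x0 (T + k)| ≤ |fσ n δ η x0 T| * β ^ k := by
      intro k
      rw [fσ_law hn hδ0 hδ1 hη hT k, abs_mul]
      rcases eq_or_lt_of_le (Finset.card_le_univ (fS n δ η x0 T)) with hcard | hcard
      · have huniv : fS n δ η x0 T = Finset.univ :=
          Finset.eq_of_subset_of_card_le (Finset.subset_univ _) (le_of_eq hcard.symm)
        rw [fσ_univ_zero hn huniv]
        simp
      · have hcard' : ((fS n δ η x0 T).card : ℝ) ≤ (n : ℝ) - 1 := by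
          have : (fS n δ η x0 T).card + 1 ≤ n := by
            simpa [Finset.card_univ] using hcard
          have := (Nat.cast_le (α := ℝ)).2 this
          push_cast at this
          linarith
        set μ : ℝ := 1 - δ + (fS n δ η x0 T).card * (δ / n) with hμ
        have hμ0 : 0 ≤ μ := by
          have : (0:ℝ) ≤ (fS n δ η x0 T).card * (δ / n) := by positivity
          simp only [hμ]; linarith
        have hμβ : μ ≤ β := by
          have : ((fS n δ η x0 T).card : ℝ) * (δ / n) ≤ ((n:ℝ) - 1) * (δ / n) :=
            mul_le_mul_of_nonneg_right hcard' (by positivity)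
          have h2 : ((n:ℝ) - 1) * (δ / n) = δ - δ / n := by field_simp
          simp only [hμ, hβ]; linarith
        have : |μ ^ k| ≤ β ^ k := by
          rw [abs_pow, abs_of_nonneg hμ0]
          exact pow_le_pow_left₀ hμ0 hμβ k
        calc |μ ^ k| * |fσ n δ η x0 T| ≤ β ^ k * |fσ n δ η x0 T| :=
              mul_le_mul_of_nonneg_right this (abs_nonneg _)
          _ = |fσ n δ η x0 T| * β ^ k := by ring
    set C : ℝ := (δ / n) * |fσ n δ η x0 T| / β with hC
    have hC0 : 0 ≤ C := by positivity
    have hCβ : (δ / n) * |fσ n δ η x0 T| = C * β := by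
      rw [hC, div_mul_cancel₀ _ hβ0.ne']
    -- deviation bound
    have hd : ∀ k, |fcTraj n δ η x0 (T + k) i - cliqueAvg n (fcTraj n δ η x0 (T + k))| ≤
        (η + C * k) * β ^ k := by
      intro k
      induction k with
      | zero => simpa using mem_fS.1 hi
      | succ k ih =>
          push_cast
          have hik : i ∈ fS n δ η x0 (T + k) := by
            rw [hT _ (Nat.le_add_right _ _)]; exact hi
          have hrec := dev_succ_mem hn hik
          have h1 : fcTraj n δ η x0 (T + (k+1)) i - cliqueAvg n (fcTraj n δ η x0 (T + (k+1)))
              = (1 - δ) * (fcTraj n δ η x0 (T + k) i - cliqueAvg n (fcTraj n δ η x0 (T + k)))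
                + (δ / n) * fσ n δ η x0 (T + k) := by
            rw [← Nat.add_assoc] at *
            exact hrec
          rw [h1]
          have hσk := hσb k
          have hbk : (0:ℝ) ≤ β ^ k := by positivity
          calc |(1 - δ) * (fcTraj n δ η x0 (T + k) i - cliqueAvg n (fcTraj n δ η x0 (T + k)))
                + (δ / n) * fσ n δ η x0 (T + k)|
              ≤ (1 - δ) * |fcTraj n δ η x0 (T + k) i - cliqueAvg n (fcTraj n δ η x0 (T + k))|
                + (δ / n) * |fσ n δ η x0 (T + k)| := by
                refine (abs_add_le _ _).trans ?_
                rw [abs_mul, abs_mul, abs_of_nonneg h1δ0,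
                  abs_of_nonneg (show (0:ℝ) ≤ δ / n by positivity)]
            _ ≤ (1 - δ) * ((η + C * k) * β ^ k) + (δ / n) * (|fσ n δ η x0 T| * β ^ k) := by
                refine add_le_add (mul_le_mul_of_nonneg_left ih h1δ0)
                  (mul_le_mul_of_nonneg_left hσk (by positivity))
            _ ≤ β * ((η + C * k) * β ^ k) + (C * β) * β ^ k := by
                have hη' : (0:ℝ) ≤ (η + C * k) * β ^ k := by positivity
                have h5 := mul_le_mul_of_nonneg_right h1δβ hη'
                have h6 : δ / (n:ℝ) * (|fσ n δ η x0 T| * β ^ k)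
                    = (δ / (n:ℝ) * |fσ n δ η x0 T|) * β ^ k := by ring
                rw [h6, hCβ]
                linarith
            _ = (η + C * ((k:ℝ)+1)) * β ^ (k+1) := by ring
    -- summable increments
    set d : ℕ → ℝ := fun t =>
      if t < T then dist (fcTraj n δ η x0 t i) (fcTraj n δ η x0 (t+1) i)
      else δ * (η + C * (t - T : ℕ)) * β ^ (t - T) with hdd
    have hle : ∀ t, dist (fcTraj n δ η x0 t i) (fcTraj n δ η x0 (t+1) i) ≤ d t := by
      intro t
      by_cases h : t < T
      · simp [hdd, h]
      · push_neg at h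
        have hit : i ∈ fS n δ η x0 t := by rw [hT _ h]; exact hi
        have hstep := fcTraj_succ_mem hit
        have : dist (fcTraj n δ η x0 t i) (fcTraj n δ η x0 (t+1) i)
            = δ * |fcTraj n δ η x0 t i - cliqueAvg n (fcTraj n δ η x0 t)| := by
          rw [Real.dist_eq, hstep]
          rw [show fcTraj n δ η x0 t i - (fcTraj n δ η x0 t i +
            δ * (cliqueAvg n (fcTraj n δ η x0 t) - fcTraj n δ η x0 t i)) =
            δ * (fcTraj n δ η x0 t i - cliqueAvg n (fcTraj n δ η x0 t)) by ring]
          rw [abs_mul, abs_of_nonneg hδ0.le]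
        rw [this, hdd]
        simp only [if_neg (not_lt.2 h)]
        have ht' : T + (t - T) = t := Nat.add_sub_cancel' h
        have := hd (t - T)
        rw [ht'] at this
        calc δ * |fcTraj n δ η x0 t i - cliqueAvg n (fcTraj n δ η x0 t)|
            ≤ δ * ((η + C * (t - T : ℕ)) * β ^ (t - T)) :=
              mul_le_mul_of_nonneg_left this hδ0.le
          _ = δ * (η + C * (t - T : ℕ)) * β ^ (t - T) := by ring
    have hsum : Summable d := by
      rw [← summable_nat_add_iff T]
      have heq : (fun k => d (k + T)) = fun k : ℕ => δ * η * β ^ k + (δ * C) * ((k:ℝ) * β ^ k) := by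
        funext k
        simp only [hdd, if_neg (by omega : ¬ k + T < T), Nat.add_sub_cancel]
        ring
      rw [heq]
      apply Summable.add
      · exact (summable_geometric_of_lt_one hβ0.le hβ1).mul_left _
      · have : Summable (fun k : ℕ => (k : ℝ) ^ 1 * β ^ k) := by
          apply summable_pow_mul_geometric_of_norm_lt_one
          rw [Real.norm_eq_abs, abs_of_nonneg hβ0.le]
          exact hβ1
        simpa [pow_one] using this.mul_left (δ * C)
    have hcauchy : CauchySeq (fun t => fcTraj n δ η x0 t i) :=
      cauchySeq_of_dist_le_of_summable d hle hsum
    exact cauchySeq_tendsto_of_complete hcauchy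
  · -- eventually frozen
    have hconst : ∀ t, T ≤ t → fcTraj n δ η x0 t i = fcTraj n δ η x0 T i := by
      intro t ht
      induction t with
      | zero => simp [Nat.le_zero.1 ht]
      | succ t ih =>
          rcases Nat.lt_or_ge T (t+1) with h | h
          · have ht' : T ≤ t := Nat.lt_succ_iff.1 h
            have : i ∉ fS n δ η x0 t := by rw [hT _ ht']; exact hi
            rw [fcTraj_succ_not this, ih ht']
          · have : T = t + 1 := le_antisymm ht h
            rw [this]
    refine ⟨fcTraj n δ η x0 T i, ?_⟩
    apply Tendsto.congr' _ tendsto_const_nhds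
    filter_upwards [eventually_ge_atTop T] with t ht
    exact (hconst t ht).symm

lemma alg1 (A a P ρ δ nn : ℝ) (h1 : nn ≠ 0) (h2 : nn - 1 ≠ 0) (hρ : ρ = 1 - δ + δ / nn) :
    A + a * (1 - P) / (nn - 1) + δ / nn * (P * a) = A + a * (1 - P * ρ) / (nn - 1) := by
  subst hρ; field_simp; ring

lemma alg2 (A a P ρ δ nn : ℝ) (h1 : nn ≠ 0) (h2 : nn - 1 ≠ 0) (hρ : ρ = 1 - δ + δ / nn) :
    A + a * (1 - P) / (nn - 1) - P * a
      + δ * (A + a * (1 - P) / (nn - 1) - (A + a * (1 - P) / (nn - 1) - P * a))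
    = A + a * (1 - P * ρ) / (nn - 1) - P * ρ * a := by
  subst hρ; field_simp; ring

set_option maxHeartbeats 1600000 in
lemma stmt17_aux (n : ℕ) (hn : 3 ≤ n) (δ η : ℝ) (hδ0 : 0 < δ) (hδ1 : δ < 1) (hη0 : 0 < η)
    (x0 : Fin n → ℝ) (i0 i1 : Fin n) (hv0 : (i0 : ℕ) = 0) (hv1 : (i1 : ℕ) = 1)
    (h1a : 0 < cliqueAvg n x0 - x0 i0)
    (h1b : cliqueAvg n x0 - x0 i0 ≤ η)
    (h2a : η < x0 i1 - cliqueAvg n x0)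
    (h2b : x0 i1 - cliqueAvg n x0 < η + (cliqueAvg n x0 - x0 i0) / ((n : ℝ) - 1))
    (h3 : ∀ j : Fin n, 2 ≤ (j : ℕ) →
      η + (cliqueAvg n x0 - x0 i0) / ((n : ℝ) - 1) ≤ |x0 j - cliqueAvg n x0|)
    (ρ : ℝ) (hρ : ρ = 1 - δ + δ / (n : ℝ))
    (tstar : ℤ)
    (htstar : tstar = ⌈Real.log (1 - ((n : ℝ) - 1) *
        (x0 i1 - cliqueAvg n x0 - η) / (cliqueAvg n x0 - x0 i0)) / Real.log ρ⌉) :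
    (∀ t : ℕ, (t : ℤ) ≤ tstar →
      (∀ j : Fin n, j ≠ i0 → fcTraj n δ η x0 t j = x0 j) ∧
      cliqueAvg n (fcTraj n δ η x0 t) - fcTraj n δ η x0 t i0 =
        ρ ^ t * (cliqueAvg n x0 - x0 i0) ∧
      0 < cliqueAvg n (fcTraj n δ η x0 t) - fcTraj n δ η x0 t i0) ∧
    (∀ t : ℕ, (t : ℤ) < tstar →
      η < fcTraj n δ η x0 t i1 - cliqueAvg n (fcTraj n δ η x0 t)) ∧
    (∀ t : ℕ, (t : ℤ) = tstar →
      fcTraj n δ η x0 t i1 - cliqueAvg n (fcTraj n δ η x0 t) ≤ η) ∧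
    (∀ i : Fin n, ∃ L : ℝ, Tendsto (fun t => fcTraj n δ η x0 t i) atTop (nhds L)) := by
  have hn0 : 0 < n := by omega
  have hnR : (3:ℝ) ≤ (n:ℝ) := by exact_mod_cast hn
  have hn1 : (0:ℝ) < (n:ℝ) - 1 := by linarith
  have hnne : (n:ℝ) ≠ 0 := by positivity
  set A : ℝ := cliqueAvg n x0 with hA
  set a : ℝ := A - x0 i0 with ha
  set b : ℝ := x0 i1 - A with hb
  set c : ℝ := 1 - ((n:ℝ) - 1) * (b - η) / a with hc
  -- basic facts about ρ and c
  have hρ0 : 0 < ρ := by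
    rw [hρ]
    have : 0 < δ / (n:ℝ) := by positivity
    linarith
  have hρ1 : ρ < 1 := by
    rw [hρ]
    have : δ / (n:ℝ) < δ := by
      rw [div_lt_iff₀ (by linarith : (0:ℝ) < (n:ℝ))]
      nlinarith
    linarith
  have hc0 : 0 < c := by
    rw [hc]
    have h1 : b - η < a / ((n:ℝ) - 1) := by rw [hb, ha]; linarith
    have h2 : ((n:ℝ) - 1) * (b - η) < a := by
      rw [lt_div_iff₀ hn1] at h1
      linarith
    have h3 : ((n:ℝ) - 1) * (b - η) / a < 1 := (div_lt_one h1a).2 h2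
    linarith
  have hc1 : c < 1 := by
    rw [hc]
    have h1 : 0 < b - η := by rw [hb]; linarith
    have h2 : 0 < ((n:ℝ) - 1) * (b - η) / a := by positivity
    linarith
  have hlogρ : Real.log ρ < 0 := Real.log_neg hρ0 hρ1
  have hlogc : Real.log c < 0 := Real.log_neg hc0 hc1
  have hpow : ∀ t : ℕ, ρ ^ t = Real.exp (t * Real.log ρ) := by
    intro t
    rw [Real.exp_nat_mul, Real.exp_log hρ0]
  -- claim A
  have hClaimA : ∀ t : ℕ, (t : ℤ) < tstar → c < ρ ^ t := by
    intro t ht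
    have h1 : ((t:ℝ)) < Real.log c / Real.log ρ := by
      have h2 : (t:ℤ) + 1 ≤ tstar := ht
      rw [htstar] at h2
      have h3 : ((t:ℝ)) + 1 ≤ (⌈Real.log c / Real.log ρ⌉ : ℝ) := by
        have := (Int.cast_le (R := ℝ)).2 h2
        push_cast at this ⊢
        convert this using 3 <;> rw [hc, hb, ha, hA]
      have h4 := Int.ceil_lt_add_one (Real.log c / Real.log ρ)
      linarith
    have h2 : Real.log c / Real.log ρ * Real.log ρ < (t:ℝ) * Real.log ρ :=
      mul_lt_mul_of_neg_right h1 hlogρ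
    rw [div_mul_cancel₀ _ (ne_of_lt hlogρ)] at h2
    calc c = Real.exp (Real.log c) := (Real.exp_log hc0).symm
      _ < Real.exp ((t:ℝ) * Real.log ρ) := Real.exp_lt_exp.2 h2
      _ = ρ ^ t := (hpow t).symm
  -- claim B
  have hClaimB : ∀ t : ℕ, (t : ℤ) = tstar → ρ ^ t ≤ c := by
    intro t ht
    have h1 : Real.log c / Real.log ρ ≤ (t:ℝ) := by
      have h2 := Int.le_ceil (Real.log c / Real.log ρ)
      rw [← htstar, ← ht] at h2
      push_cast at h2
      convert h2 using 2 <;> rw [hc, hb, ha, hA]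
    have h2 : (t:ℝ) * Real.log ρ ≤ Real.log c / Real.log ρ * Real.log ρ := by
      exact mul_le_mul_of_nonpos_right h1 hlogρ.le
    rw [div_mul_cancel₀ _ (ne_of_lt hlogρ)] at h2
    calc ρ ^ t = Real.exp ((t:ℝ) * Real.log ρ) := hpow t
      _ ≤ Real.exp (Real.log c) := Real.exp_le_exp.2 h2
      _ = c := Real.exp_log hc0
  -- main invariant
  have hρt : ∀ t : ℕ, 0 < ρ ^ t := fun t => pow_pos hρ0 t
  have hρt1 : ∀ t : ℕ, ρ ^ t ≤ 1 := fun t => pow_le_one₀ hρ0.le hρ1.le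
  have hi01 : i1 ≠ i0 := by
    intro h
    rw [Fin.ext_iff, hv0, hv1] at h
    omega
  have key1 : ∀ t : ℕ,
      cliqueAvg n (fcTraj n δ η x0 t) = A + a * (1 - ρ ^ t) / ((n:ℝ) - 1) →
      fcTraj n δ η x0 t i1 = x0 i1 →
      c < ρ ^ t →
      η < fcTraj n δ η x0 t i1 - cliqueAvg n (fcTraj n δ η x0 t) := by
    intro t havg hfr hct
    rw [havg, hfr]
    have h1 : (1 - ρ ^ t) < ((n:ℝ) - 1) * (b - η) / a := by
      rw [hc] at hct; linarith
    have h2 : (1 - ρ ^ t) * a < ((n:ℝ) - 1) * (b - η) := (lt_div_iff₀ h1a).1 h1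
    have h3 : a * (1 - ρ ^ t) / ((n:ℝ) - 1) < b - η := by
      rw [div_lt_iff₀ hn1]
      nlinarith
    have hbx : x0 i1 - A = b := by rw [hb]
    linarith
  have main : ∀ t : ℕ, (t : ℤ) ≤ tstar →
      (∀ j : Fin n, j ≠ i0 → fcTraj n δ η x0 t j = x0 j) ∧
      cliqueAvg n (fcTraj n δ η x0 t) = A + a * (1 - ρ ^ t) / ((n:ℝ) - 1) ∧
      fcTraj n δ η x0 t i0 = cliqueAvg n (fcTraj n δ η x0 t) - ρ ^ t * a := by
    intro t
    induction t with
    | zero =>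
        intro _
        have h0 : cliqueAvg n (fcTraj n δ η x0 0) = A := rfl
        refine ⟨fun j _ => rfl, by rw [h0, pow_zero]; ring, ?_⟩
        show x0 i0 = cliqueAvg n (fcTraj n δ η x0 0) - ρ ^ 0 * a
        rw [h0, pow_zero, ha]; ring
    | succ t ih =>
        intro ht1
        have htlt : (t : ℤ) < tstar := by push_cast at ht1 ⊢; omega
        obtain ⟨hfr, havg, hx0t⟩ := ih (le_of_lt htlt)
        have hct := hClaimA t htlt
        have hD0 : 0 ≤ a * (1 - ρ ^ t) / ((n:ℝ) - 1) :=
          div_nonneg (mul_nonneg h1a.le (by linarith [hρt1 t])) hn1.le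
        have hD1 : a * (1 - ρ ^ t) / ((n:ℝ) - 1) < a / ((n:ℝ) - 1) := by
          rw [div_lt_div_iff₀ hn1 hn1]
          nlinarith [mul_pos (mul_pos h1a (hρt t)) hn1]
        have hfS : fS n δ η x0 t = {i0} := by
          ext j
          rw [mem_fS, Finset.mem_singleton]
          constructor
          · intro hj
            by_contra hne
            have hval : (j : ℕ) ≠ 0 := fun h0 => hne (by rw [Fin.ext_iff, hv0, h0])
            rcases Nat.lt_or_ge (j : ℕ) 2 with h2 | h2
            · have hji : j = i1 := by rw [Fin.ext_iff, hv1]; omega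
              subst hji
              have hk := key1 t havg (hfr j hi01) hct
              exact absurd hj (not_le.2 (lt_of_lt_of_le hk (le_abs_self _)))
            · have hjfr : fcTraj n δ η x0 t j = x0 j :=
                hfr j (fun h => hval (by rw [h, hv0]))
              have h3j := h3 j h2
              have hDfull : x0 j - A =
                  (x0 j - (A + a * (1 - ρ ^ t) / ((n:ℝ) - 1)))
                    + a * (1 - ρ ^ t) / ((n:ℝ) - 1) := by ring
              have h6 : |x0 j - A| ≤
                  |x0 j - (A + a * (1 - ρ ^ t) / ((n:ℝ) - 1))|
                    + a * (1 - ρ ^ t) / ((n:ℝ) - 1) := by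
                rw [hDfull]
                refine (abs_add_le _ _).trans ?_
                rw [abs_of_nonneg hD0]
              have habs : η < |fcTraj n δ η x0 t j - cliqueAvg n (fcTraj n δ η x0 t)| := by
                rw [hjfr, havg]
                linarith
              exact absurd hj (not_le.2 habs)
          · intro hj
            subst hj
            rw [hx0t]
            rw [show cliqueAvg n (fcTraj n δ η x0 t) - ρ ^ t * a
                - cliqueAvg n (fcTraj n δ η x0 t) = -(ρ ^ t * a) by ring, abs_neg,
              abs_of_nonneg (mul_nonneg (hρt t).le h1a.le)]
            nlinarith [hρt1 t, hρt t]
        have hfσ : fσ n δ η x0 t = -(ρ ^ t * a) := by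
          rw [fσ, hfS, Finset.sum_singleton, hx0t]; ring
        have havg1 : cliqueAvg n (fcTraj n δ η x0 (t+1)) =
            cliqueAvg n (fcTraj n δ η x0 t) + (δ / n) * (ρ ^ t * a) := by
          rw [cliqueAvg_succ n hn0, hfσ]; ring
        have havg1' : cliqueAvg n (fcTraj n δ η x0 (t+1)) =
            A + a * (1 - ρ ^ (t+1)) / ((n:ℝ) - 1) := by
          rw [havg1, havg, pow_succ]
          linear_combination alg1 A a (ρ ^ t) ρ δ (n:ℝ) hnne (ne_of_gt hn1) hρ
        refine ⟨?_, havg1', ?_⟩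
        · intro j hj
          have hjn : j ∉ fS n δ η x0 t := by
            rw [hfS, Finset.mem_singleton]; exact hj
          rw [fcTraj_succ_not hjn]
          exact hfr j hj
        · have hmem : i0 ∈ fS n δ η x0 t := by
            rw [hfS]; exact Finset.mem_singleton_self _
          rw [fcTraj_succ_mem hmem, hx0t, havg1', havg, pow_succ]
          linear_combination alg2 A a (ρ ^ t) ρ δ (n:ℝ) hnne (ne_of_gt hn1) hρ
  refine ⟨?_, ?_, ?_, fun i => fc_converges hn0 hδ0 hδ1 hη0.le x0 i⟩
  · intro t ht
    obtain ⟨hfr, havg, hx0t⟩ := main t ht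
    have hpos : 0 < ρ ^ t * a := mul_pos (hρt t) h1a
    refine ⟨hfr, ?_, ?_⟩
    · rw [hx0t]; ring
    · rw [hx0t]; linarith
  · intro t ht
    obtain ⟨hfr, havg, _⟩ := main t (le_of_lt ht)
    exact key1 t havg (hfr i1 hi01) (hClaimA t ht)
  · intro t ht
    obtain ⟨hfr, havg, _⟩ := main t (le_of_eq ht)
    have hcb := hClaimB t ht
    rw [havg, hfr i1 hi01]
    have h1 : ((n:ℝ) - 1) * (b - η) / a ≤ 1 - ρ ^ t := by
      rw [hc] at hcb; linarith
    have h2 : ((n:ℝ) - 1) * (b - η) ≤ (1 - ρ ^ t) * a := by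
      rw [div_le_iff₀ h1a] at h1; linarith
    have h3 : b - η ≤ a * (1 - ρ ^ t) / ((n:ℝ) - 1) := by
      rw [le_div_iff₀ hn1]
      nlinarith
    have hbx : x0 i1 - A = b := by rw [hb]
    linarith

/-- for `m = n`, `n ≥ 3`, under the initial conditions of the set
`\mathcal{B}_{11}`: with `ρ = 1 − δ + δ/n` and
`t* = ⌈ln(1 − (n−1)(x_2(0) − x̄(0) − η)/(x̄(0) − x_1(0))) / ln ρ⌉`,
(i) for `0 ≤ t ≤ t*` all nodes other than node 1 keep their initial values and
`x̄(t) − x_1(t) = ρ^t (x̄(0) − x_1(0)) > 0`;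
(ii) `x_2(t) − x̄(t) > η` for `0 ≤ t < t*` and `x_2(t*) − x̄(t*) ≤ η`;
(iii) every node state converges to a finite limit. -/
theorem stmt17 (n : ℕ) (hn : 3 ≤ n) (δ η : ℝ) (hδ0 : 0 < δ) (hδ1 : δ < 1) (hη0 : 0 < η)
    (x0 : Fin n → ℝ)
    (h1a : 0 < cliqueAvg n x0 - x0 ⟨0, by omega⟩)
    (h1b : cliqueAvg n x0 - x0 ⟨0, by omega⟩ ≤ η)
    (h2a : η < x0 ⟨1, by omega⟩ - cliqueAvg n x0)
    (h2b : x0 ⟨1, by omega⟩ - cliqueAvg n x0 <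
      η + (cliqueAvg n x0 - x0 ⟨0, by omega⟩) / ((n : ℝ) - 1))
    (h3 : ∀ j : Fin n, 2 ≤ (j : ℕ) →
      η + (cliqueAvg n x0 - x0 ⟨0, by omega⟩) / ((n : ℝ) - 1) ≤ |x0 j - cliqueAvg n x0|)
    (ρ : ℝ) (hρ : ρ = 1 - δ + δ / (n : ℝ))
    (tstar : ℤ)
    (htstar : tstar = ⌈Real.log (1 - ((n : ℝ) - 1) *
        (x0 ⟨1, by omega⟩ - cliqueAvg n x0 - η) / (cliqueAvg n x0 - x0 ⟨0, by omega⟩)) /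
        Real.log ρ⌉) :
    (∀ t : ℕ, (t : ℤ) ≤ tstar →
      (∀ j : Fin n, j ≠ ⟨0, by omega⟩ → fcTraj n δ η x0 t j = x0 j) ∧
      cliqueAvg n (fcTraj n δ η x0 t) - fcTraj n δ η x0 t ⟨0, by omega⟩ =
        ρ ^ t * (cliqueAvg n x0 - x0 ⟨0, by omega⟩) ∧
      0 < cliqueAvg n (fcTraj n δ η x0 t) - fcTraj n δ η x0 t ⟨0, by omega⟩) ∧
    (∀ t : ℕ, (t : ℤ) < tstar →
      η < fcTraj n δ η x0 t ⟨1, by omega⟩ - cliqueAvg n (fcTraj n δ η x0 t)) ∧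
    (∀ t : ℕ, (t : ℤ) = tstar →
      fcTraj n δ η x0 t ⟨1, by omega⟩ - cliqueAvg n (fcTraj n δ η x0 t) ≤ η) ∧
    (∀ i : Fin n, ∃ L : ℝ, Tendsto (fun t => fcTraj n δ η x0 t i) atTop (nhds L)) := by
  exact stmt17_aux n hn δ η hδ0 hδ1 hη0 x0 ⟨0, by omega⟩ ⟨1, by omega⟩ rfl rfl
    h1a h1b h2a h2b h3 ρ hρ tstar htstar
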